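/- Let G be a graph with maximum degree at most 4. Then there exists a maximum matching M of G such that every connected component of the graph G ∖ M (obtained from G by deleting the edges of M) contains a vertex v satisfying either (a) deg_{G∖M}(v) ≤ 2, or (b) deg_{G∖M}(v) = 3 and v has at most two neighbours of degree 4 in G ∖ M. Moreover, for any maximum matching M of G, no two vertices of degree 4 in G ∖ M are adjacent in G ∖ M. -/

import Mathlib

open SimpleGraph

/-- A proper `k`-edge-colouring of `G`: distinct edges sharing a vertex receive
different colours. -/
def IsProperEdgeColoring {V : Type*} (G : SimpleGraph V) (k : ℕ)
    (φ : G.edgeSet → Fin k) : Prop :=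
  ∀ e₁ e₂ : G.edgeSet, e₁ ≠ e₂ →
    (∃ v : V, v ∈ (e₁ : Sym2 V) ∧ v ∈ (e₂ : Sym2 V)) → φ e₁ ≠ φ e₂

/-- The spanning subgraph of `G` consisting of the edges coloured `a` or `b` under `φ`. -/
def kempeGraph {V : Type*} (G : SimpleGraph V) {k : ℕ} (φ : G.edgeSet → Fin k)
    (a b : Fin k) : SimpleGraph V where
  Adj u v := ∃ h : G.Adj u v, φ ⟨s(u, v), h⟩ = a ∨ φ ⟨s(u, v), h⟩ = b
  symm := by
    constructor
    rintro u v ⟨h, hc⟩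
    refine ⟨h.symm, ?_⟩
    have he : (⟨s(v, u), h.symm⟩ : G.edgeSet) = ⟨s(u, v), h⟩ :=
      Subtype.ext (Sym2.eq_swap)
    rw [he]
    exact hc
  loopless := by
    constructor
    rintro v ⟨h, _⟩
    exact G.loopless.irrefl v h

/-- The edge `e` lies in the Kempe chain determined by the colours `a, b` and the
connected component of the vertex `w` in the `(a,b)`-subgraph. -/
def InKempeChain {V : Type*} (G : SimpleGraph V) {k : ℕ} (φ : G.edgeSet → Fin k)
    (a b : Fin k) (w : V) (e : G.edgeSet) : Prop :=
  (φ e = a ∨ φ e = b) ∧ ∃ u ∈ (e : Sym2 V), (kempeGraph G φ a b).Reachable w u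

/-- `ψ` is obtained from `φ` by a single Kempe change: the colours `a` and `b` are
swapped on one connected component of the subgraph induced by the edges coloured
`a` or `b`, and all other edges keep their colour. -/
def KempeChange {V : Type*} (G : SimpleGraph V) (k : ℕ)
    (φ ψ : G.edgeSet → Fin k) : Prop :=
  ∃ (a b : Fin k) (w : V), ∀ e : G.edgeSet,
    (InKempeChain G φ a b w e → ψ e = Equiv.swap a b (φ e)) ∧
    (¬ InKempeChain G φ a b w e → ψ e = φ e)

/-- Kempe equivalence: `ψ` is obtained from `φ` by a finite sequence of Kempe changes. -/
def KempeEquiv {V : Type*} (G : SimpleGraph V) (k : ℕ)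
    (φ ψ : G.edgeSet → Fin k) : Prop :=
  Relation.ReflTransGen (KempeChange G k) φ ψ

/-- A set of edges of `G` is a matching if its edges are pairwise non-adjacent
(no two distinct edges share a vertex). -/
def IsMatchingSet {V : Type*} (G : SimpleGraph V) (M : Set (Sym2 V)) : Prop :=
  M ⊆ G.edgeSet ∧
    ∀ e₁ ∈ M, ∀ e₂ ∈ M, e₁ ≠ e₂ → ∀ v : V, v ∈ e₁ → v ∉ e₂

/-- A vertex is covered by a set of edges if it is an endpoint of one of them. -/
def CoveredBy {V : Type*} (M : Set (Sym2 V)) (v : V) : Prop :=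
  ∃ e ∈ M, v ∈ e

/-- `M` is a maximum matching of `G`: a matching of largest possible size. -/
def IsMaximumMatching {V : Type*} (G : SimpleGraph V) (M : Set (Sym2 V)) : Prop :=
  IsMatchingSet G M ∧ ∀ M' : Set (Sym2 V), IsMatchingSet G M' → M'.ncard ≤ M.ncard

set_option linter.unusedSectionVars false
set_option maxHeartbeats 1000000

def GoodP {V : Type*} (G : SimpleGraph V) (M : Set (Sym2 V)) (v : V) : Prop :=
  ((G.deleteEdges M).neighborSet v).ncard ≤ 2 ∨
    (((G.deleteEdges M).neighborSet v).ncard = 3 ∧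
      {u : V | (G.deleteEdges M).Adj v u ∧
        ((G.deleteEdges M).neighborSet u).ncard = 4}.ncard ≤ 2)

def badSet {V : Type*} (G : SimpleGraph V) (M : Set (Sym2 V)) : Set V :=
  {v | ¬ ∃ w, (G.deleteEdges M).connectedComponentMk w =
      (G.deleteEdges M).connectedComponentMk v ∧ GoodP G M w}


section aux
variable {V : Type*} [Fintype V] {G : SimpleGraph V} {M : Set (Sym2 V)}


lemma sym2_eq_right {v w w' : V} (h : s(v,w) = s(v,w')) : w = w' := by
  rw [Sym2.eq_iff] at h
  rcases h with ⟨-, h⟩ | ⟨h1, h2⟩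
  · exact h
  · exact h2.trans h1

lemma aux_unique_partner (hm : IsMatchingSet G M) {v w w' : V}
    (h1 : s(v,w) ∈ M) (h2 : s(v,w') ∈ M) : w = w' := by
  by_contra hne
  exact hm.2 _ h1 _ h2 (fun he => hne (sym2_eq_right he)) v (by simp) (by simp)

lemma covered_iff {v : V} : CoveredBy M v ↔ ∃ w, s(v,w) ∈ M := by
  constructor
  · rintro ⟨e, he, hv⟩
    obtain ⟨w, rfl⟩ := Sym2.mem_iff_exists.1 hv
    exact ⟨w, he⟩
  · rintro ⟨w, hw⟩
    exact ⟨_, hw, by simp⟩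

lemma nbr_covered (hm : IsMatchingSet G M) {v w : V} (he : s(v,w) ∈ M) :
    (G.deleteEdges M).neighborSet v = G.neighborSet v \ {w} := by
  ext b
  simp only [mem_neighborSet, deleteEdges_adj, Set.mem_diff, Set.mem_singleton_iff]
  constructor
  · rintro ⟨hadj, hnm⟩
    refine ⟨hadj, ?_⟩
    rintro rfl
    exact hnm he
  · rintro ⟨hadj, hbw⟩
    exact ⟨hadj, fun hmem => hbw (aux_unique_partner hm hmem he)⟩

lemma nbr_uncovered {v : V} (h : ¬ CoveredBy M v) :
    (G.deleteEdges M).neighborSet v = G.neighborSet v := by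
  ext b
  simp only [mem_neighborSet, deleteEdges_adj]
  constructor
  · exact fun hb => hb.1
  · intro hb
    exact ⟨hb, fun hmem => h ⟨_, hmem, by simp⟩⟩

lemma ncard_covered (hm : IsMatchingSet G M) {v w : V} (he : s(v,w) ∈ M) :
    ((G.deleteEdges M).neighborSet v).ncard = (G.neighborSet v).ncard - 1 := by
  rw [nbr_covered hm he]
  exact Set.ncard_diff_singleton_of_mem ((G.mem_edgeSet).1 (hm.1 he))

lemma nbr_subset {v : V} :
    (G.deleteEdges M).neighborSet v ⊆ G.neighborSet v := by
  intro b hb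
  exact ((deleteEdges_adj).1 hb).1

lemma augment_lemma (hM : IsMaximumMatching G M) {u w : V} (h : G.Adj u w)
    (hu : ¬ CoveredBy M u) (hw : ¬ CoveredBy M w) : False := by
  have hnm : s(u,w) ∉ M := fun hmem => hu ⟨_, hmem, by simp⟩
  have hmat : IsMatchingSet G (insert s(u,w) M) := by
    constructor
    · exact Set.insert_subset ((G.mem_edgeSet).2 h) hM.1.1
    · intro e₁ h₁ e₂ h₂ hne v hv₁ hv₂
      rcases h₁ with rfl | h₁ <;> rcases h₂ with rfl | h₂
      · exact hne rfl
      · rcases Sym2.mem_iff.1 hv₁ with rfl | rfl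
        · exact hu ⟨e₂, h₂, hv₂⟩
        · exact hw ⟨e₂, h₂, hv₂⟩
      · rcases Sym2.mem_iff.1 hv₂ with rfl | rfl
        · exact hu ⟨e₁, h₁, hv₁⟩
        · exact hw ⟨e₁, h₁, hv₁⟩
      · exact hM.1.2 e₁ h₁ e₂ h₂ hne v hv₁ hv₂
  have hcard := hM.2 _ hmat
  rw [Set.ncard_insert_of_notMem hnm] at hcard
  omega

lemma deg4_facts (hΔ : ∀ v : V, (G.neighborSet v).ncard ≤ 4)
    (hm : IsMatchingSet G M) {v : V}
    (hd : ((G.deleteEdges M).neighborSet v).ncard = 4) :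
    ¬ CoveredBy M v ∧ (G.deleteEdges M).neighborSet v = G.neighborSet v := by
  have hcov : ¬ CoveredBy M v := by
    intro hc
    obtain ⟨w, hw⟩ := covered_iff.1 hc
    have h1 := ncard_covered hm hw
    have h2 := hΔ v
    omega
  exact ⟨hcov, nbr_uncovered hcov⟩

lemma exists_max_matching (G : SimpleGraph V) : ∃ M, IsMaximumMatching G M := by
  classical
  set A := {n | ∃ M, IsMatchingSet G M ∧ M.ncard = n} with hA
  have h0 : (0 : ℕ) ∈ A := by
    refine ⟨∅, ⟨Set.empty_subset _, ?_⟩, by simp⟩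
    intro e₁ h₁
    exact absurd h₁ (Set.notMem_empty e₁)
  have hbdd : BddAbove A := by
    refine ⟨(Set.univ : Set (Sym2 V)).ncard, ?_⟩
    rintro n ⟨M, hm, rfl⟩
    exact Set.ncard_le_ncard (Set.subset_univ M)
  obtain ⟨M, hm, hcard⟩ := Nat.sSup_mem ⟨0, h0⟩ hbdd
  exact ⟨M, hm, fun M' hm' => hcard ▸ le_csSup hbdd ⟨M', hm', rfl⟩⟩


lemma key_swap (hΔ : ∀ v : V, (G.neighborSet v).ncard ≤ 4)
    (hM : IsMaximumMatching G M) (v₀ : V)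
    (hbad : ∀ w, (G.deleteEdges M).connectedComponentMk w =
      (G.deleteEdges M).connectedComponentMk v₀ → ¬ GoodP G M w) :
    ∃ M' : Set (Sym2 V), IsMaximumMatching G M' ∧ badSet G M' ⊂ badSet G M := by
  classical
  have hmM : IsMatchingSet G M := hM.1
  set H : SimpleGraph V := G.deleteEdges M with hHdef
  set dd : V → ℕ := fun v => (H.neighborSet v).ncard with hdd
  set inC : V → Prop := fun v => H.connectedComponentMk v = H.connectedComponentMk v₀
    with hinC
  -- basic degree bound
  have hdle : ∀ v, dd v ≤ (G.neighborSet v).ncard := fun v =>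
    Set.ncard_le_ncard nbr_subset
  -- S1
  have hS1 : ∀ v, inC v → dd v = 3 ∨ dd v = 4 := by
    intro v hv
    have h := hbad v hv
    rw [GoodP] at h
    push_neg at h
    have h1 : 2 < dd v := h.1
    have h2 := hdle v
    have h3 := hΔ v
    omega
  -- S6 : deg-3 vertices have all neighbours of degree 4 (and in C)
  have hS6 : ∀ v, inC v → dd v = 3 → ∀ b ∈ H.neighborSet v, dd b = 4 ∧ inC b := by
    intro v hv h3 b hb
    have hadj : H.Adj v b := hb
    have hbC : inC b := by
      show H.connectedComponentMk b = _
      rw [← ConnectedComponent.sound hadj.reachable]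
      exact hv
    have h := hbad v hv
    rw [GoodP] at h
    push_neg at h
    have hge : 3 ≤ {u : V | H.Adj v u ∧ dd u = 4}.ncard := by
      have h2 : 2 < {u : V | H.Adj v u ∧ dd u = 4}.ncard := h.2 h3
      omega
    have hsub : {u : V | H.Adj v u ∧ dd u = 4} ⊆ H.neighborSet v :=
      fun u hu => hu.1
    have heq : {u : V | H.Adj v u ∧ dd u = 4} = H.neighborSet v :=
      Set.eq_of_subset_of_ncard_le hsub (by rw [show (H.neighborSet v).ncard = dd v from rfl, h3]; omega)
    have : b ∈ {u : V | H.Adj v u ∧ dd u = 4} := heq ▸ hb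
    exact ⟨this.2, hbC⟩
  -- S4 : deg-4 vertices: uncovered, full nbhd, nbrs are deg-3 in C
  have hS4 : ∀ v, inC v → dd v = 4 →
      (¬ CoveredBy M v ∧ H.neighborSet v = G.neighborSet v) ∧
      ∀ b ∈ H.neighborSet v, dd b = 3 ∧ inC b := by
    intro v hv h4
    have hfacts := deg4_facts hΔ hmM (v := v) h4
    refine ⟨hfacts, ?_⟩
    intro b hb
    have hadj : H.Adj v b := hb
    have hbC : inC b := by
      show H.connectedComponentMk b = _
      rw [← ConnectedComponent.sound hadj.reachable]
      exact hv
    rcases hS1 b hbC with h3 | h4'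
    · exact ⟨h3, hbC⟩
    · exfalso
      have hbfacts := deg4_facts hΔ hmM (v := b) h4'
      exact augment_lemma hM ((deleteEdges_adj.1 hadj).1) hfacts.1 hbfacts.1
  -- S5/S8 : deg-3 vertices are matched, to a partner outside C
  have hS5 : ∀ v, inC v → dd v = 3 →
      ∃ y, s(v,y) ∈ M ∧ ¬ inC y ∧
        H.neighborSet v = G.neighborSet v \ {y} ∧ y ∈ G.neighborSet v := by
    intro v hv h3
    have hne : (H.neighborSet v).Nonempty :=
      Set.nonempty_of_ncard_ne_zero (by rw [show (H.neighborSet v).ncard = dd v from rfl, h3]; omega)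
    obtain ⟨u, hu⟩ := hne
    obtain ⟨hu4, huC⟩ := hS6 v hv h3 u hu
    have hucov : ¬ CoveredBy M u := ((hS4 u huC hu4).1).1
    have hvadj : G.Adj v u := (deleteEdges_adj.1 hu).1
    have hvcov : CoveredBy M v := by
      by_contra h
      exact augment_lemma hM hvadj h hucov
    obtain ⟨y, hy⟩ := covered_iff.1 hvcov
    have hyG : y ∈ G.neighborSet v := (G.mem_edgeSet).1 (hmM.1 hy)
    have hset : H.neighborSet v = G.neighborSet v \ {y} := nbr_covered hmM hy
    refine ⟨y, hy, ?_, hset, hyG⟩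
    intro hyC
    -- y is covered; in C it must be a deg-3 vertex
    have hycov : CoveredBy M y := ⟨_, hy, by simp⟩
    have hy3 : dd y = 3 := by
      rcases hS1 y hyC with h | h
      · exact h
      · exact absurd hycov ((hS4 y hyC h).1).1.elim
    -- a deg-4 neighbour u₂ of y
    have hne2 : (H.neighborSet y).Nonempty :=
      Set.nonempty_of_ncard_ne_zero (by rw [show (H.neighborSet y).ncard = dd y from rfl, hy3]; omega)
    obtain ⟨u₂, hu₂⟩ := hne2
    obtain ⟨hu₂4, hu₂C⟩ := hS6 y hyC hy3 u₂ hu₂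
    have hu₂cov : ¬ CoveredBy M u₂ := ((hS4 u₂ hu₂C hu₂4).1).1
    -- a deg-4 neighbour u' ≠ u₂ of v
    obtain ⟨u', hu', hne'⟩ := Set.exists_ne_of_one_lt_ncard
      (by rw [show (H.neighborSet v).ncard = dd v from rfl, h3]; omega) u₂
    obtain ⟨hu'4, hu'C⟩ := hS6 v hv h3 u' hu'
    have hu'cov : ¬ CoveredBy M u' := ((hS4 u' hu'C hu'4).1).1
    -- build a bigger matching
    have hvy : v ≠ y := G.ne_of_adj hyG
    have hyu₂ : y ≠ u₂ := G.ne_of_adj ((deleteEdges_adj.1 hu₂).1)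
    have hvu' : v ≠ u' := G.ne_of_adj ((deleteEdges_adj.1 hu').1)
    have hu'y : u' ≠ y := fun h => hu'cov (h ▸ hycov)
    have hu₂v : u₂ ≠ v := fun h => hu₂cov (h ▸ hvcov)
    have hu'u₂ : u' ≠ u₂ := hne'
    set M₀ : Set (Sym2 V) := M \ {s(v,y)} with hM₀
    have hvmem : ∀ e ∈ M₀, v ∉ e := by
      rintro e ⟨heM, henot⟩ hvmem
      obtain ⟨w, rfl⟩ := Sym2.mem_iff_exists.1 hvmem
      have : w = y := aux_unique_partner hmM heM hy
      subst this
      exact henot rfl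
    have hymem : ∀ e ∈ M₀, y ∉ e := by
      rintro e ⟨heM, henot⟩ hymem
      obtain ⟨w, rfl⟩ := Sym2.mem_iff_exists.1 hymem
      have hy' : s(y,v) ∈ M := by rwa [Sym2.eq_swap]
      have : w = v := aux_unique_partner hmM heM hy'
      subst this
      exact henot (Sym2.eq_swap)
    have huncmem : ∀ e ∈ M₀, ∀ z, ¬ CoveredBy M z → z ∉ e :=
      fun e he z hz hmem => hz ⟨e, he.1, hmem⟩
    set M₂ : Set (Sym2 V) := insert s(v,u') (insert s(y,u₂) M₀) with hM₂
    have hmat : IsMatchingSet G M₂ := by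
      constructor
      · refine Set.insert_subset ((G.mem_edgeSet).2 ((deleteEdges_adj.1 hu').1)) ?_
        refine Set.insert_subset ((G.mem_edgeSet).2 ((deleteEdges_adj.1 hu₂).1)) ?_
        exact fun e he => hmM.1 he.1
      · intro e₁ h₁ e₂ h₂ hne z hz₁ hz₂
        rcases h₁ with rfl | rfl | h₁ <;> rcases h₂ with rfl | rfl | h₂
        · exact hne rfl
        · rcases Sym2.mem_iff.1 hz₁ with rfl | rfl <;>
            rcases Sym2.mem_iff.1 hz₂ with h | h
          · exact hvy h
          · exact hu₂v h.symm
          · exact hu'y h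
          · exact hu'u₂ h
        · rcases Sym2.mem_iff.1 hz₁ with rfl | rfl
          · exact hvmem e₂ h₂ hz₂
          · exact huncmem e₂ h₂ _ hu'cov hz₂
        · rcases Sym2.mem_iff.1 hz₁ with rfl | rfl <;>
            rcases Sym2.mem_iff.1 hz₂ with h | h
          · exact hvy h.symm
          · exact hu'y h.symm
          · exact hu₂v h
          · exact hu'u₂ h.symm
        · exact hne rfl
        · rcases Sym2.mem_iff.1 hz₁ with rfl | rfl
          · exact hymem e₂ h₂ hz₂
          · exact huncmem e₂ h₂ _ hu₂cov hz₂
        · rcases Sym2.mem_iff.1 hz₂ with rfl | rfl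
          · exact hvmem e₁ h₁ hz₁
          · exact huncmem e₁ h₁ _ hu'cov hz₁
        · rcases Sym2.mem_iff.1 hz₂ with rfl | rfl
          · exact hymem e₁ h₁ hz₁
          · exact huncmem e₁ h₁ _ hu₂cov hz₁
        · exact hmM.2 e₁ h₁.1 e₂ h₂.1 hne z hz₁ hz₂
    -- cardinality
    have hc0 : M₀.ncard = M.ncard - 1 := by
      rw [hM₀, Set.ncard_diff (Set.singleton_subset_iff.2 hy), Set.ncard_singleton]
    have hn1 : s(y,u₂) ∉ M₀ := fun h => hu₂cov ⟨_, h.1, by simp⟩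
    have hn2 : s(v,u') ∉ insert s(y,u₂) M₀ := by
      rintro (h | h)
      · rw [Sym2.eq_iff] at h
        rcases h with ⟨h, -⟩ | ⟨h, -⟩
        · exact hvy h
        · exact hu₂v h.symm
      · exact hvmem _ h (by simp)
    have hMpos : 1 ≤ M.ncard := (Set.ncard_pos (Set.toFinite M)).2 ⟨_, hy⟩
    have hc2 : M₂.ncard = M.ncard + 1 := by
      rw [hM₂, Set.ncard_insert_of_notMem hn2, Set.ncard_insert_of_notMem hn1, hc0]
      omega
    have := hM.2 _ hmat
    omega
  -- ## Hall's theorem: match every degree-4 vertex of C to a distinct neighbour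
  set D4 : Set V := {v | inC v ∧ dd v = 4} with hD4
  set Dfin : Finset V := (Set.toFinite D4).toFinset with hDfinset
  have hDfin : ∀ u : V, u ∈ Dfin ↔ (inC u ∧ dd u = 4) := fun u =>
    Set.Finite.mem_toFinset _
  set t : {u // u ∈ Dfin} → Finset V :=
    (fun u => (Set.toFinite (H.neighborSet u.1)).toFinset) with ht
  have htmem : ∀ (u : {u // u ∈ Dfin}) (x : V), x ∈ t u ↔ H.Adj u.1 x := fun u x =>
    Set.Finite.mem_toFinset _
  have htcard : ∀ u : {u // u ∈ Dfin}, (t u).card = 4 := by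
    intro u
    have h4 : dd u.1 = 4 := ((hDfin u.1).1 u.2).2
    rw [ht, ← Set.ncard_eq_toFinset_card]
    exact h4
  have hallhyp : ∀ s : Finset {u // u ∈ Dfin}, s.card ≤ (s.biUnion t).card := by
    intro s
    have hkey : s.card * 4 ≤ (s.biUnion t).card * 3 := by
      apply Finset.card_mul_le_card_mul (fun u x => x ∈ t u)
      · intro a ha
        have hsub : t a ⊆ Finset.bipartiteAbove (fun u x => x ∈ t u) (s.biUnion t) a := by
          intro x hx
          rw [Finset.bipartiteAbove, Finset.mem_filter]
          exact ⟨Finset.mem_biUnion.2 ⟨a, ha, hx⟩, hx⟩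
        calc 4 = (t a).card := (htcard a).symm
          _ ≤ _ := Finset.card_le_card hsub
      · intro b hb
        obtain ⟨u₀, hu₀s, hbu₀⟩ := Finset.mem_biUnion.1 hb
        have hb3 : dd b = 3 :=
          ((hS4 u₀.1 ((hDfin u₀.1).1 u₀.2).1 ((hDfin u₀.1).1 u₀.2).2).2 b
            ((htmem u₀ b).1 hbu₀)).1
        have hcle : (Finset.bipartiteBelow (fun u x => x ∈ t u) s b).card ≤
            ((Set.toFinite (H.neighborSet b)).toFinset).card := by
          apply Finset.card_le_card_of_injOn (fun u => u.1)
          · intro a ha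
            rw [Finset.bipartiteBelow, Finset.mem_coe, Finset.mem_filter] at ha
            have hadj : H.Adj a.1 b := (htmem a b).1 ha.2
            rw [Finset.mem_coe, Set.Finite.mem_toFinset]
            exact hadj.symm
          · intro a _ a' _ h
            exact Subtype.ext h
        have h3' : ((Set.toFinite (H.neighborSet b)).toFinset).card = 3 := by
          rw [← Set.ncard_eq_toFinset_card]
          exact hb3
        rw [h3'] at hcle
        exact hcle
    by_contra hlt
    push_neg at hlt
    omega
  obtain ⟨σf, hσinj, hσmem⟩ :=
    (Finset.all_card_le_biUnion_card_iff_exists_injective t).1 hallhyp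
  have hσadj : ∀ u : {u // u ∈ Dfin}, H.Adj u.1 (σf u) := fun u =>
    (htmem u (σf u)).1 (hσmem u)
  have huD : ∀ u : {u // u ∈ Dfin}, inC u.1 ∧ dd u.1 = 4 := fun u => (hDfin u.1).1 u.2
  have hucov : ∀ u : {u // u ∈ Dfin}, ¬ CoveredBy M u.1 := fun u =>
    ((hS4 u.1 (huD u).1 (huD u).2).1).1
  have huN : ∀ u : {u // u ∈ Dfin}, H.neighborSet u.1 = G.neighborSet u.1 := fun u =>
    ((hS4 u.1 (huD u).1 (huD u).2).1).2
  have hσC : ∀ u : {u // u ∈ Dfin}, inC (σf u) ∧ dd (σf u) = 3 := fun u => by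
    have h := (hS4 u.1 (huD u).1 (huD u).2).2 (σf u) (hσadj u)
    exact ⟨h.2, h.1⟩
  have hσne : ∀ u u' : {u // u ∈ Dfin}, σf u ≠ u'.1 := by
    intro u u' h
    have h1 := (hσC u).2
    have h2 := (huD u').2
    rw [h] at h1
    omega
  have hpart : ∀ u : {u // u ∈ Dfin}, ∃ y, s(σf u, y) ∈ M ∧ ¬ inC y ∧
      H.neighborSet (σf u) = G.neighborSet (σf u) \ {y} ∧ y ∈ G.neighborSet (σf u) :=
    fun u => hS5 (σf u) (hσC u).1 (hσC u).2
  set yp : {u // u ∈ Dfin} → V := fun u => (hpart u).choose with hypdef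
  have hypM : ∀ u, s(σf u, yp u) ∈ M := fun u => (hpart u).choose_spec.1
  have hypC : ∀ u, ¬ inC (yp u) := fun u => (hpart u).choose_spec.2.1
  have hypN : ∀ u, H.neighborSet (σf u) = G.neighborSet (σf u) \ {yp u} :=
    fun u => (hpart u).choose_spec.2.2.1
  have hypG : ∀ u, yp u ∈ G.neighborSet (σf u) := fun u => (hpart u).choose_spec.2.2.2
  -- the new matching
  set Rem : Set (Sym2 V) := Set.range (fun u : {u // u ∈ Dfin} => s(σf u, yp u))
    with hRem
  set Addt : Set (Sym2 V) := Set.range (fun u : {u // u ∈ Dfin} => s(u.1, σf u))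
    with hAddt
  set M' : Set (Sym2 V) := (M \ Rem) ∪ Addt with hM'def
  have hRemsub : Rem ⊆ M := by rintro e ⟨u, rfl⟩; exact hypM u
  have hAddE : ∀ u : {u // u ∈ Dfin}, G.Adj u.1 (σf u) := fun u =>
    (deleteEdges_adj.1 (hσadj u)).1
  have hAddnotM : ∀ e ∈ Addt, e ∉ M := by
    rintro e ⟨u, rfl⟩ hmem
    exact hucov u ⟨_, hmem, by simp⟩
  have hM'mat : IsMatchingSet G M' := by
    constructor
    · rintro e (⟨heM, -⟩ | ⟨u, rfl⟩)
      · exact hmM.1 heM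
      · exact (G.mem_edgeSet).2 (hAddE u)
    · intro e₁ h₁ e₂ h₂ hne z hz₁ hz₂
      rcases h₁ with ⟨h₁M, h₁R⟩ | ⟨u₁, rfl⟩ <;> rcases h₂ with ⟨h₂M, h₂R⟩ | ⟨u₂, rfl⟩
      · exact hmM.2 e₁ h₁M e₂ h₂M hne z hz₁ hz₂
      · rcases Sym2.mem_iff.1 hz₂ with rfl | rfl
        · exact hucov u₂ ⟨e₁, h₁M, hz₁⟩
        · obtain ⟨w, rfl⟩ := Sym2.mem_iff_exists.1 hz₁
          have : w = yp u₂ := aux_unique_partner hmM h₁M (hypM u₂)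
          subst this
          exact h₁R ⟨u₂, rfl⟩
      · rcases Sym2.mem_iff.1 hz₁ with rfl | rfl
        · exact hucov u₁ ⟨e₂, h₂M, hz₂⟩
        · obtain ⟨w, rfl⟩ := Sym2.mem_iff_exists.1 hz₂
          have : w = yp u₁ := aux_unique_partner hmM h₂M (hypM u₁)
          subst this
          exact h₂R ⟨u₁, rfl⟩
      · have hne' : u₁ ≠ u₂ := fun h => hne (by rw [h])
        rcases Sym2.mem_iff.1 hz₁ with rfl | rfl <;>
          rcases Sym2.mem_iff.1 hz₂ with h | h
        · exact hne' (Subtype.ext h)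
        · exact hσne u₂ u₁ h.symm
        · exact hσne u₁ u₂ h
        · exact hne' (hσinj h)
  have hinjA : Function.Injective (fun u : {u // u ∈ Dfin} => s(u.1, σf u)) := by
    intro a b h
    rw [Sym2.eq_iff] at h
    rcases h with ⟨h1, -⟩ | ⟨h1, -⟩
    · exact Subtype.ext h1
    · exact absurd h1.symm (hσne b a)
  have hinjR : Function.Injective (fun u : {u // u ∈ Dfin} => s(σf u, yp u)) := by
    intro a b h
    rw [Sym2.eq_iff] at h
    rcases h with ⟨h1, -⟩ | ⟨h1, -⟩
    · exact hσinj h1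
    · exact absurd ((hσC a).1) (by rw [h1]; exact hypC b)
  have hcardA : Addt.ncard = (Set.univ : Set {u // u ∈ Dfin}).ncard := by
    rw [hAddt, ← Set.image_univ]
    exact Set.ncard_image_of_injective _ hinjA
  have hcardR : Rem.ncard = (Set.univ : Set {u // u ∈ Dfin}).ncard := by
    rw [hRem, ← Set.image_univ]
    exact Set.ncard_image_of_injective _ hinjR
  have hdisj : Disjoint (M \ Rem) Addt := by
    rw [Set.disjoint_left]
    intro e he hA
    exact hAddnotM e hA he.1
  have hRle : Rem.ncard ≤ M.ncard := Set.ncard_le_ncard hRemsub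
  have hcM' : M'.ncard = M.ncard := by
    rw [hM'def, Set.ncard_union_eq hdisj, Set.ncard_diff hRemsub, hcardA]
    omega
  have hM'max : IsMaximumMatching G M' :=
    ⟨hM'mat, fun N hN => hcM' ▸ hM.2 N hN⟩
  -- coverage facts for M'
  have hcovu' : ∀ u : {u // u ∈ Dfin}, s(u.1, σf u) ∈ M' := fun u => Or.inr ⟨u, rfl⟩
  have hypuncov : ∀ u : {u // u ∈ Dfin}, ¬ CoveredBy M' (yp u) := by
    rintro u ⟨e, he, hmem⟩
    rcases he with ⟨heM, heR⟩ | ⟨u', rfl⟩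
    · obtain ⟨w, rfl⟩ := Sym2.mem_iff_exists.1 hmem
      have h1 : s(yp u, σf u) ∈ M := by rw [Sym2.eq_swap]; exact hypM u
      have : w = σf u := aux_unique_partner hmM heM h1
      subst this
      exact heR ⟨u, Sym2.eq_swap⟩
    · rcases Sym2.mem_iff.1 hmem with h | h
      · exact hypC u (by rw [h]; exact (huD u').1)
      · exact hypC u (by rw [h]; exact (hσC u').1)
  -- kept matching edges for degree-3 vertices not in the range of σf
  have hkeep : ∀ x, inC x → (∀ u : {u // u ∈ Dfin}, σf u ≠ x) →
      ∀ y', s(x, y') ∈ M → ¬ inC y' → s(x, y') ∈ M' := by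
    intro x hx hnr y' hmem hy'
    refine Or.inl ⟨hmem, ?_⟩
    rintro ⟨u, heq⟩
    rw [Sym2.eq_iff] at heq
    rcases heq with ⟨h1, -⟩ | ⟨h1, -⟩
    · exact hnr u h1
    · exact hy' (h1 ▸ (hσC u).1)
  -- every C-vertex has degree 3 in G \ M'
  have hd' : ∀ v, inC v → ((G.deleteEdges M').neighborSet v).ncard = 3 := by
    intro v hv
    rcases hS1 v hv with h3 | h4
    · by_cases hr : ∃ u : {u // u ∈ Dfin}, σf u = v
      · obtain ⟨u, rfl⟩ := hr
        have hcov : s(σf u, u.1) ∈ M' := by rw [Sym2.eq_swap]; exact hcovu' u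
        have hnc := ncard_covered hM'mat hcov
        have hGn : (G.neighborSet (σf u)).ncard = 4 := by
          have h2 := Set.ncard_diff_singleton_of_mem (hypG u)
          have h3' : (H.neighborSet (σf u)).ncard = 3 := (hσC u).2
          rw [hypN u] at h3'
          have h4' := hΔ (σf u)
          omega
        omega
      · obtain ⟨y', hy'M, hy'C, hy'N, hy'G⟩ := hS5 v hv h3
        have hkept : s(v, y') ∈ M' := hkeep v hv (fun u h => hr ⟨u, h⟩) y' hy'M hy'C
        have hnc := ncard_covered hM'mat hkept
        have hGn : (G.neighborSet v).ncard = 4 := by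
          have h2 := Set.ncard_diff_singleton_of_mem hy'G
          have h3' : (H.neighborSet v).ncard = 3 := h3
          rw [hy'N] at h3'
          have h4' := hΔ v
          omega
        omega
    · have hvD : v ∈ Dfin := (hDfin v).2 ⟨hv, h4⟩
      have hnc : ((G.deleteEdges M').neighborSet v).ncard = (G.neighborSet v).ncard - 1 :=
        ncard_covered hM'mat (hcovu' ⟨v, hvD⟩)
      have hGn : (G.neighborSet v).ncard = 4 := by
        have heq := huN ⟨v, hvD⟩
        have h4' : (H.neighborSet v).ncard = 4 := h4
        rw [heq] at h4'
        exact h4'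
      omega
  -- every C-vertex is good for M'
  have hgood' : ∀ v, inC v → GoodP G M' v := by
    intro v hv
    right
    refine ⟨hd' v hv, ?_⟩
    rcases hS1 v hv with h3 | h4
    · by_cases hr : ∃ u : {u // u ∈ Dfin}, σf u = v
      · obtain ⟨u, rfl⟩ := hr
        have hsub : {w : V | (G.deleteEdges M').Adj (σf u) w ∧
            ((G.deleteEdges M').neighborSet w).ncard = 4} ⊆ {yp u} := by
          intro w hw
          obtain ⟨hadj, hw4⟩ := hw
          have hwG : w ∈ G.neighborSet (σf u) := (deleteEdges_adj.1 hadj).1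
          by_contra hne
          have hwH : w ∈ H.neighborSet (σf u) := by
            rw [hypN u]
            exact ⟨hwG, hne⟩
          obtain ⟨hw4', hwC⟩ := hS6 (σf u) (hσC u).1 (hσC u).2 w hwH
          have := hd' w hwC
          omega
        have h1 := Set.ncard_le_ncard hsub (Set.toFinite _)
        rw [Set.ncard_singleton] at h1
        omega
      · obtain ⟨y', hy'M, hy'C, hy'N, hy'G⟩ := hS5 v hv h3
        have hkept : s(v, y') ∈ M' := hkeep v hv (fun u h => hr ⟨u, h⟩) y' hy'M hy'C
        have hsub : {w : V | (G.deleteEdges M').Adj v w ∧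
            ((G.deleteEdges M').neighborSet w).ncard = 4} ⊆ (∅ : Set V) := by
          intro w hw
          obtain ⟨hadj, hw4⟩ := hw
          have hwG : w ∈ G.neighborSet v := (deleteEdges_adj.1 hadj).1
          have hwne : w ≠ y' := by
            rintro rfl
            exact (deleteEdges_adj.1 hadj).2 hkept
          have hwH : w ∈ H.neighborSet v := by
            rw [hy'N]
            exact ⟨hwG, hwne⟩
          obtain ⟨hw4', hwC⟩ := hS6 v hv h3 w hwH
          have := hd' w hwC
          omega
        have h1 := Set.ncard_le_ncard hsub (Set.toFinite _)
        rw [Set.ncard_empty] at h1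
        omega
    · have hvD : v ∈ Dfin := (hDfin v).2 ⟨hv, h4⟩
      have hsub : {w : V | (G.deleteEdges M').Adj v w ∧
          ((G.deleteEdges M').neighborSet w).ncard = 4} ⊆ (∅ : Set V) := by
        intro w hw
        obtain ⟨hadj, hw4⟩ := hw
        have hwG : w ∈ G.neighborSet v := (deleteEdges_adj.1 hadj).1
        have hwH : w ∈ H.neighborSet v := by
          rw [huN ⟨v, hvD⟩]
          exact hwG
        obtain ⟨hw3, hwC⟩ := (hS4 v hv h4).2 w hwH
        have := hd' w hwC
        omega
      have h1 := Set.ncard_le_ncard hsub (Set.toFinite _)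
      rw [Set.ncard_empty] at h1
      omega
  -- ## transfer outside the modified region
  set CY : Set V := {z | inC z} ∪ Set.range yp with hCY
  have hadj_iff : ∀ a, a ∉ CY → ∀ b,
      ((G.deleteEdges M).Adj a b ↔ (G.deleteEdges M').Adj a b) := by
    intro a ha b
    have hmem_iff : (s(a,b) ∈ M ↔ s(a,b) ∈ M') := by
      constructor
      · intro hmem
        refine Or.inl ⟨hmem, ?_⟩
        rintro ⟨u, heq⟩
        have heq' : s(σf u, yp u) = s(a, b) := heq
        have hamem : a ∈ s(σf u, yp u) := by rw [heq']; simp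
        rcases Sym2.mem_iff.1 hamem with h | h
        · exact ha (Or.inl (show inC a by rw [h]; exact (hσC u).1))
        · exact ha (Or.inr ⟨u, h.symm⟩)
      · rintro (⟨hmem, -⟩ | ⟨u, heq⟩)
        · exact hmem
        · exfalso
          have heq' : s(u.1, σf u) = s(a, b) := heq
          have hamem : a ∈ s(u.1, σf u) := by rw [heq']; simp
          rcases Sym2.mem_iff.1 hamem with h | h
          · exact ha (Or.inl (show inC a by rw [h]; exact (huD u).1))
          · exact ha (Or.inl (show inC a by rw [h]; exact (hσC u).1))
    constructor
    · intro h
      obtain ⟨hG, hnm⟩ := deleteEdges_adj.1 h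
      exact deleteEdges_adj.2 ⟨hG, fun hm => hnm (hmem_iff.2 hm)⟩
    · intro h
      obtain ⟨hG, hnm⟩ := deleteEdges_adj.1 h
      exact deleteEdges_adj.2 ⟨hG, fun hm => hnm (hmem_iff.1 hm)⟩
  have hd_eq : ∀ a, a ∉ CY →
      (G.deleteEdges M').neighborSet a = (G.deleteEdges M).neighborSet a := by
    intro a ha
    ext b
    exact (hadj_iff a ha b).symm
  have htrans1 : ∀ v, (∀ a, (G.deleteEdges M').Reachable v a → a ∉ CY) →
      ∀ b, (G.deleteEdges M).Reachable v b → (G.deleteEdges M').Reachable v b := by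
    intro v hinv b hr
    obtain ⟨p⟩ := hr
    have aux : ∀ (x y : V), (G.deleteEdges M).Walk x y →
        (G.deleteEdges M').Reachable v x → (G.deleteEdges M').Reachable v y := by
      intro x y p
      induction p with
      | nil => exact id
      | cons h q ih =>
        intro hvx
        exact ih (hvx.trans (Adj.reachable ((hadj_iff _ (hinv _ hvx) _).1 h)))
    exact aux v b p (Reachable.refl v)
  have htrans2 : ∀ v, (∀ a, (G.deleteEdges M').Reachable v a → a ∉ CY) →
      ∀ b, (G.deleteEdges M').Reachable v b → (G.deleteEdges M).Reachable v b := by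
    intro v hinv b hr
    obtain ⟨p⟩ := hr
    have aux : ∀ (x y : V), (G.deleteEdges M').Walk x y →
        (G.deleteEdges M').Reachable v x → (G.deleteEdges M).Reachable v x →
        (G.deleteEdges M).Reachable v y := by
      intro x y p
      induction p with
      | nil => exact fun _ h => h
      | cons h q ih =>
        intro hvx hvx'
        exact ih (hvx.trans h.reachable)
          (hvx'.trans (Adj.reachable ((hadj_iff _ (hinv _ hvx) _).2 h)))
    exact aux v b p (Reachable.refl v) (Reachable.refl v)
  -- ## the bad set strictly shrinks
  have hsub : badSet G M' ⊆ badSet G M := by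
    intro v hv
    rw [badSet, Set.mem_setOf_eq] at hv ⊢
    have hinv : ∀ a, (G.deleteEdges M').Reachable v a → a ∉ CY := by
      intro a hra hin
      rcases hin with hC | ⟨u, rfl⟩
      · exact hv ⟨a, (ConnectedComponent.sound hra).symm, hgood' a hC⟩
      · have hadjx : (G.deleteEdges M').Adj (σf u) (yp u) := by
          rw [deleteEdges_adj]
          refine ⟨hypG u, ?_⟩
          intro hmem
          exact hypuncov u ⟨_, hmem, by simp⟩
        refine hv ⟨σf u, ?_, hgood' (σf u) (hσC u).1⟩
        have h1 : (G.deleteEdges M').connectedComponentMk v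
            = (G.deleteEdges M').connectedComponentMk (yp u) :=
          ConnectedComponent.sound hra
        have h2 : (G.deleteEdges M').connectedComponentMk (σf u)
            = (G.deleteEdges M').connectedComponentMk (yp u) :=
          ConnectedComponent.sound hadjx.reachable
        exact h2.trans h1.symm
    have hvCY : v ∉ CY := hinv v (Reachable.refl v)
    rintro ⟨g, hg, hgood⟩
    have hrg : (G.deleteEdges M).Reachable v g := (ConnectedComponent.exact hg).symm
    have hrg' : (G.deleteEdges M').Reachable v g := htrans1 v hinv g hrg
    have hgCY : g ∉ CY := hinv g hrg'
    refine hv ⟨g, (ConnectedComponent.sound hrg').symm, ?_⟩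
    have hdg := hd_eq g hgCY
    have hset_eq : {u : V | (G.deleteEdges M').Adj g u ∧
          ((G.deleteEdges M').neighborSet u).ncard = 4}
        = {u : V | (G.deleteEdges M).Adj g u ∧
          ((G.deleteEdges M).neighborSet u).ncard = 4} := by
      ext w
      simp only [Set.mem_setOf_eq]
      constructor
      · rintro ⟨hadj, h4⟩
        have hadjH : (G.deleteEdges M).Adj g w := (hadj_iff g hgCY w).2 hadj
        have hwCY : w ∉ CY := hinv w (hrg'.trans hadj.reachable)
        rw [hd_eq w hwCY] at h4
        exact ⟨hadjH, h4⟩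
      · rintro ⟨hadj, h4⟩
        have hadj' : (G.deleteEdges M').Adj g w := (hadj_iff g hgCY w).1 hadj
        have hwCY : w ∉ CY := hinv w (hrg'.trans hadj'.reachable)
        rw [← hd_eq w hwCY] at h4
        exact ⟨hadj', h4⟩
    rw [GoodP] at hgood ⊢
    rcases hgood with h | ⟨h3, hc⟩
    · left
      rw [hdg]
      exact h
    · right
      rw [hdg, hset_eq]
      exact ⟨h3, hc⟩
  have hmem0 : v₀ ∈ badSet G M := by
    rw [badSet, Set.mem_setOf_eq]
    rintro ⟨g, hg, hgood⟩
    exact hbad g hg hgood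
  have hnot0 : v₀ ∉ badSet G M' := by
    rw [badSet, Set.mem_setOf_eq]
    intro hcon
    exact hcon ⟨v₀, rfl, hgood' v₀ rfl⟩
  exact ⟨M', hM'max, (Set.ssubset_iff_of_subset hsub).2 ⟨v₀, hmem0, hnot0⟩⟩





end aux

/-- **Lemma.** Let `G` be a graph with maximum degree at most 4. Then there is a maximum
matching `M` of `G` such that every connected component of `G \ M` contains a vertex `v`
with either (a) `deg_{G\M}(v) ≤ 2`, or (b) `deg_{G\M}(v) = 3` and `v` has at most two
neighbours of degree 4 in `G \ M`. Moreover, for any maximum matching `M` of `G`, no two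
vertices of degree 4 in `G \ M` are adjacent in `G \ M`. -/

theorem maximum_matching_good_components {V : Type*} [Fintype V]
    (G : SimpleGraph V) (hΔ : ∀ v : V, (G.neighborSet v).ncard ≤ 4) :
    (∃ M : Set (Sym2 V), IsMaximumMatching G M ∧
      ∀ c : (G.deleteEdges M).ConnectedComponent,
        ∃ v : V, (G.deleteEdges M).connectedComponentMk v = c ∧
          (((G.deleteEdges M).neighborSet v).ncard ≤ 2 ∨
            (((G.deleteEdges M).neighborSet v).ncard = 3 ∧
              {u : V | (G.deleteEdges M).Adj v u ∧
                ((G.deleteEdges M).neighborSet u).ncard = 4}.ncard ≤ 2))) ∧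
    (∀ M : Set (Sym2 V), IsMaximumMatching G M →
      ∀ u w : V, (G.deleteEdges M).Adj u w →
        ¬(((G.deleteEdges M).neighborSet u).ncard = 4 ∧
          ((G.deleteEdges M).neighborSet w).ncard = 4)) := by
  classical
  constructor
  · -- existence of a good maximum matching
    obtain ⟨M₀, hM₀⟩ := exists_max_matching G
    set A : Set ℕ := {n | ∃ M, IsMaximumMatching G M ∧ (badSet G M).ncard = n} with hA
    have hAne : A.Nonempty := ⟨_, M₀, hM₀, rfl⟩
    obtain ⟨M, hMmax, hMn⟩ := Nat.sInf_mem hAne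
    refine ⟨M, hMmax, ?_⟩
    have hempty : badSet G M = ∅ := by
      by_contra hne
      obtain ⟨v₀, hv₀⟩ := Set.nonempty_iff_ne_empty.2 hne
      have hbad : ∀ w, (G.deleteEdges M).connectedComponentMk w =
          (G.deleteEdges M).connectedComponentMk v₀ → ¬ GoodP G M w := by
        intro w hw hg
        exact hv₀ ⟨w, hw, hg⟩
      obtain ⟨M', hM'max, hss⟩ := key_swap hΔ hMmax v₀ hbad
      have hlt : (badSet G M').ncard < (badSet G M).ncard :=
        Set.ncard_lt_ncard hss (Set.toFinite _)
      have hle : sInf A ≤ (badSet G M').ncard := Nat.sInf_le ⟨M', hM'max, rfl⟩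
      omega
    intro c
    obtain ⟨v, hv⟩ := c.exists_rep
    have hvnot : v ∉ badSet G M := by
      rw [hempty]
      exact Set.notMem_empty v
    rw [badSet, Set.mem_setOf_eq, not_not] at hvnot
    obtain ⟨w, hw, hgood⟩ := hvnot
    exact ⟨w, hw.trans hv, hgood⟩
  · -- no two degree-4 vertices are adjacent in G \ M
    intro M hM u w hadj h
    obtain ⟨h4u, h4w⟩ := h
    have hu := deg4_facts hΔ hM.1 h4u
    have hw := deg4_facts hΔ hM.1 h4w
    exact augment_lemma hM ((deleteEdges_adj.1 hadj).1) hu.1 hw.1
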